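/- For any profile P, the defensible set D(P) is nonempty; in particular, any alternative x minimizing the maximal margin against it, i.e., minimizing max_{y} Margin_P(y,x) (the Minimax winner), belongs to D(P). -/
import Mathlib


open scoped Classical

/-- A profile assigns to each voter in a finite nonempty set of voters a
preference relation on the alternatives. -/
structure Profile (α V : Type*) where
  voters : Finset V
  pref : V → α → α → Prop
  voters_nonempty : voters.Nonempty

/-- The number of voters strictly preferring `x` to `y` (as an integer). -/
noncomputable def Profile.support {α V : Type*} (P : Profile α V) (x y : α) : ℤ :=
  ((P.voters.filter fun i => P.pref i x y).card : ℤ)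

/-- The majority margin of `x` over `y`. -/
noncomputable def Profile.margin {α V : Type*} (P : Profile α V) (x y : α) : ℤ :=
  P.support x y - P.support y x

/-- Every voter's preference is a strict linear order. -/
def Profile.linear {α V : Type*} (P : Profile α V) : Prop :=
  ∀ i ∈ P.voters,
    (∀ x, ¬ P.pref i x x) ∧
    (∀ x y z, P.pref i x y → P.pref i y z → P.pref i x z) ∧
    (∀ x y, x ≠ y → P.pref i x y ∨ P.pref i y x)

/-- Every voter's preference is a strict weak order. -/
def Profile.swo {α V : Type*} (P : Profile α V) : Prop :=
  ∀ i ∈ P.voters,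
    (∀ x, ¬ P.pref i x x) ∧
    (∀ x y z, P.pref i x y → P.pref i y z → P.pref i x z) ∧
    (∀ x y z, (¬ P.pref i x y ∧ ¬ P.pref i y x) → (¬ P.pref i y z ∧ ¬ P.pref i z y) →
      (¬ P.pref i x z ∧ ¬ P.pref i z x))

/-- The defensible set of a profile. -/
noncomputable def Profile.defensible {α V : Type*} (P : Profile α V) : Set α :=
  {x | ∀ y, ∃ z, P.margin y x ≤ P.margin z y}

/-- The defensible set is nonempty; indeed any Minimax winner
(minimizer of the maximal margin against it) is in the defensible set. -/
theorem defensible_nonempty_and_minimax_mem {α V : Type*} [Fintype α] [Nonempty α]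
    (P : Profile α V) (hswo : P.swo) :
    P.defensible.Nonempty ∧
      ∀ x : α,
        (∀ x' : α,
          (Finset.univ.sup' Finset.univ_nonempty fun y => P.margin y x) ≤
            (Finset.univ.sup' Finset.univ_nonempty fun y => P.margin y x')) →
        x ∈ P.defensible := by
  have key : ∀ x : α,
      (∀ x' : α,
        (Finset.univ.sup' Finset.univ_nonempty fun y => P.margin y x) ≤
          (Finset.univ.sup' Finset.univ_nonempty fun y => P.margin y x')) →
      x ∈ P.defensible := by
    intro x hx y
    obtain ⟨z, _, hz⟩ := Finset.exists_mem_eq_sup' (Finset.univ_nonempty)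
      (fun z => P.margin z y)
    refine ⟨z, ?_⟩
    calc P.margin y x ≤ Finset.univ.sup' Finset.univ_nonempty fun w => P.margin w x :=
          Finset.le_sup' (fun w => P.margin w x) (Finset.mem_univ y)
      _ ≤ Finset.univ.sup' Finset.univ_nonempty fun w => P.margin w y := hx y
      _ = P.margin z y := hz
  obtain ⟨x, _, hx⟩ := Finset.exists_min_image Finset.univ
    (fun x => Finset.univ.sup' Finset.univ_nonempty fun y => P.margin y x)
    Finset.univ_nonempty
  exact ⟨⟨x, key x fun x' => hx x' (Finset.mem_univ x')⟩, key⟩
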